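/- arXiv:1608.02682 — 3 statements merged into one kernel-verified Lean document; each statement's English description precedes it below -/
import Mathlib

section
/- Let d' : X → Finset X → ℝ be any function satisfying the recursion d'(x, ∅) = s(x, ∅) and, for every nonempty U, d'(x, U) = min( s(x, U), min over y ∈ U of d'(x, U \ {y}) ). Then for every variable x and every finite set U of variables, d'(x, U) equals the minimum of s(x, W) over all subsets W ⊆ U. -/
/-- `d s x U` : the score of selecting optimal parents of `x` from `U`,
defined as the minimum of `s x W` over all subsets `W ⊆ U`. -/
noncomputable def d {X : Type*} [DecidableEq X] (s : X → Finset X → ℝ)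
    (x : X) (U : Finset X) : ℝ :=
  U.powerset.inf' (Finset.powerset_nonempty U) (s x)

lemma d_rec {X : Type*} [DecidableEq X] (s : X → Finset X → ℝ) (x : X)
    (U : Finset X) (hU : U.Nonempty) :
    d s x U = min (s x U) (U.inf' hU (fun y => d s x (U.erase y))) := by
  apply le_antisymm
  · apply le_min
    · exact Finset.inf'_le _ (Finset.mem_powerset.mpr le_rfl)
    · rw [Finset.le_inf'_iff]
      intro y hy
      unfold d
      rw [Finset.le_inf'_iff]
      intro W hW
      exact Finset.inf'_le _ (Finset.mem_powerset.mpr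
        ((Finset.mem_powerset.mp hW).trans (Finset.erase_subset _ _)))
  · unfold d
    rw [Finset.le_inf'_iff]
    intro W hW
    rw [Finset.mem_powerset] at hW
    by_cases hWU : W = U
    · subst hWU; exact min_le_left _ _
    · have : ∃ y ∈ U, y ∉ W := Finset.exists_of_ssubset (hW.ssubset_of_ne hWU)
      obtain ⟨y, hyU, hyW⟩ := this
      refine (min_le_right _ _).trans ?_
      refine (Finset.inf'_le _ hyU).trans ?_
      exact Finset.inf'_le _ (Finset.mem_powerset.mpr
        (Finset.subset_erase.mpr ⟨hW, hyW⟩))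

/-- Any function `d'` satisfying the recursion
`d'(x, ∅) = s(x, ∅)` and, for nonempty `U`,
`d'(x, U) = min (s(x, U)) (min_{y ∈ U} d'(x, U \ {y}))`
equals the minimum of `s(x, W)` over all subsets `W ⊆ U`. -/
theorem d_recursion_eq_min_over_subsets
    {X : Type*} [Fintype X] [DecidableEq X] [Nonempty X]
    (s : X → Finset X → ℝ) (d' : X → Finset X → ℝ)
    (h0 : ∀ x : X, d' x ∅ = s x ∅)
    (h1 : ∀ (x : X) (U : Finset X) (hU : U.Nonempty),
      d' x U = min (s x U) (U.inf' hU (fun y => d' x (U.erase y)))) :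
    ∀ (x : X) (U : Finset X), d' x U = d s x U := by
  intro x U
  induction U using Finset.strongInduction with
  | _ U ih =>
    rcases U.eq_empty_or_nonempty with rfl | hU
    · rw [h0]
      unfold d
      simp
    · rw [h1 x U hU, d_rec s x U hU]
      congr 1
      apply Finset.inf'_congr _ rfl
      intro y hy
      exact ih _ (Finset.erase_ssubset hy)
end

section
/- For every variable x and every finite set U of variables, there exists a subset W ⊆ U that is a maximal candidate parents set for x and satisfies d(x, U) = s(x, W). Consequently, d(x, U) equals the minimum of s(x, W) taken over all maximal candidate parents sets W of x with W ⊆ U, so memoizing s only on maximal candidate parents sets suffices to answer all queries d(x, U). -/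
lemma d_le_s {X : Type*} [DecidableEq X] (s : X → Finset X → ℝ)
    (x : X) {W U : Finset X} (h : W ⊆ U) : d s x U ≤ s x W :=
  Finset.inf'_le _ (Finset.mem_powerset.mpr h)

lemma d_mono {X : Type*} [DecidableEq X] (s : X → Finset X → ℝ)
    (x : X) {W U : Finset X} (h : W ⊆ U) : d s x U ≤ d s x W := by
  apply Finset.le_inf'
  intro V hV
  exact d_le_s s x ((Finset.mem_powerset.mp hV).trans h)

/-- For every `x` and `U` there is a maximal candidate parents set `W ⊆ U`
with `d x U = s x W`; consequently `d x U` is the minimum of `s x W` over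
all maximal candidate parents sets `W` of `x` with `W ⊆ U`. -/
theorem d_eq_min_over_maximal_candidates
    {X : Type*} [Fintype X] [DecidableEq X] [Nonempty X]
    (s : X → Finset X → ℝ) (x : X) (U : Finset X) :
    (∃ W : Finset X, W ⊆ U ∧ (∀ W' : Finset X, W' ⊂ W → d s x W < d s x W') ∧
        d s x U = s x W) ∧
    (∀ W : Finset X, W ⊆ U → (∀ W' : Finset X, W' ⊂ W → d s x W < d s x W') →
        d s x U ≤ s x W) := by
  constructor
  · -- Consider subsets of U achieving the infimum, take one of minimal card.
    have hne : (U.powerset.filter (fun W => s x W = d s x U)).Nonempty := by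
      obtain ⟨W, hW, hWe⟩ := Finset.exists_mem_eq_inf' (Finset.powerset_nonempty U) (s x)
      exact ⟨W, Finset.mem_filter.mpr ⟨hW, hWe.symm⟩⟩
    obtain ⟨W, hWmem, hWmin⟩ := Finset.exists_min_image _ Finset.card hne
    rw [Finset.mem_filter, Finset.mem_powerset] at hWmem
    obtain ⟨hWU, hWs⟩ := hWmem
    refine ⟨W, hWU, ?_, hWs.symm⟩
    intro W' hW'
    have hW'U : W' ⊆ U := hW'.subset.trans hWU
    have hdW : d s x W = d s x U :=
      le_antisymm (by rw [← hWs]; exact d_le_s s x (le_refl W)) (d_mono s x hWU)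
    rw [hdW]
    rcases lt_or_eq_of_le (d_mono s x hW'U) with h | h
    · exact h
    · -- d x W' = d x U : its witness contradicts minimality of card W
      exfalso
      obtain ⟨V, hV, hVe⟩ := Finset.exists_mem_eq_inf' (Finset.powerset_nonempty W') (s x)
      rw [Finset.mem_powerset] at hV
      have hVs : s x V = d s x U := by rw [h]; exact hVe.symm
      have := hWmin V (Finset.mem_filter.mpr ⟨Finset.mem_powerset.mpr (hV.trans hW'U), hVs⟩)
      have hVW : V ⊂ W := lt_of_le_of_lt hV hW'
      exact absurd (Finset.card_lt_card hVW) (not_lt.mpr this)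
  · intro W hWU _
    exact d_le_s s x hWU
end

section
/- Let x and y be distinct variables, and let U be a finite set of variables with x ∉ U and y ∉ U. If U is a superset of an optimal parents set of x, i.e. d(x, U) = d(x, univ \ {x}), then d(y, U) + d(x, U ∪ {y}) ≥ d(x, U) + d(y, U ∪ {x}). That is, placing x immediately after U in a topological ordering costs no more than placing y first and x second. -/
lemma d_anti {X : Type*} [DecidableEq X] (s : X → Finset X → ℝ) (x : X)
    {A B : Finset X} (h : A ⊆ B) : d s x B ≤ d s x A := by
  apply Finset.le_inf'
  intro W hW
  exact Finset.inf'_le _ (Finset.mem_powerset.mpr ((Finset.mem_powerset.mp hW).trans h))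

/-- If `U` is a superset of an optimal parents set of `x`, then placing `x`
immediately after `U` costs no more than placing `y` first and `x` second:
`d y U + d x (U ∪ {y}) ≥ d x U + d y (U ∪ {x})`. -/
theorem extension_swap_inequality
    {X : Type*} [Fintype X] [DecidableEq X] [Nonempty X]
    (s : X → Finset X → ℝ) (x y : X) (U : Finset X)
    (hxy : x ≠ y) (hx : x ∉ U) (hy : y ∉ U)
    (hopt : d s x U = d s x (Finset.univ \ {x})) :
    d s y U + d s x (insert y U) ≥ d s x U + d s y (insert x U) := by
  have hsub : insert y U ⊆ Finset.univ \ {x} := by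
    intro z hz
    simp only [Finset.mem_sdiff, Finset.mem_univ, Finset.mem_singleton, true_and]
    rcases Finset.mem_insert.mp hz with rfl | hz
    · exact fun h => hxy h.symm
    · exact fun h => hx (h ▸ hz)
  have h1 : d s x (insert y U) ≤ d s x U := d_anti s x (Finset.subset_insert y U)
  have h2 : d s x U ≤ d s x (insert y U) := hopt ▸ d_anti s x hsub
  have h3 : d s y (insert x U) ≤ d s y U := d_anti s y (Finset.subset_insert x U)
  linarith
end
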